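/- Let L be a commutative ring with an automorphism group Σ acting so that L is Σ-simple, reduced, Noetherian, and zero-dimensional (Artinian). Then L is isomorphic as a ring to Fⁿ for a single field F, and Σ acts transitively on the set of indecomposable idempotents of L. -/

import Mathlib

section Aux

variable {L G : Type*} [CommRing L] [Group G] (φ : G →* RingAut L)

private lemma aux_symm_apply (k : G) (x : L) : (φ k).symm x = φ k⁻¹ x := by
  rw [map_inv]; rfl

private lemma aux_mul_apply (a b : G) (x : L) : φ a (φ b x) = φ (a * b) x := by
  rw [map_mul]; rfl

/-- Transitivity of the group action on maximal ideals. -/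
private lemma aux_trans [Nontrivial L] [IsArtinianRing L]
    (hsimple : ∀ I : Ideal L, (∀ g : G, ∀ x ∈ I, φ g x ∈ I) → I = ⊥ ∨ I = ⊤)
    (I J : Ideal L) (hI : I.IsMaximal) (hJ : J.IsMaximal) :
    ∃ g : G, I.map (φ g : L →+* L) = J := by
  classical
  haveI := hI; haveI := hJ
  set S : Set (Ideal L) := Set.range (fun g : G => I.map (φ g : L →+* L)) with hS
  have hSsub : S ⊆ {K : Ideal L | K.IsMaximal} := by
    rintro _ ⟨g, rfl⟩
    exact Ideal.map_isMaximal_of_equiv (φ g)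
  have hfin : S.Finite := (IsArtinianRing.setOfPred_isMaximal_finite L).subset hSsub
  have hstab : ∀ g : G, ∀ x ∈ sInf S, φ g x ∈ sInf S := by
    intro g x hx
    refine (Submodule.mem_sInf).2 ?_
    rintro _ ⟨h, rfl⟩
    have hx' : x ∈ I.map (φ (g⁻¹ * h) : L →+* L) :=
      (Submodule.mem_sInf).1 hx _ ⟨g⁻¹ * h, rfl⟩
    have := Ideal.symm_apply_mem_of_equiv_iff (I := I) (f := φ (g⁻¹ * h)) (y := x) |>.2 hx'
    rw [aux_symm_apply] at this
    have h2 : φ (h⁻¹) (φ g x) ∈ I := by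
      rw [aux_mul_apply]
      simpa [mul_inv_rev] using this
    have := Ideal.symm_apply_mem_of_equiv_iff (I := I) (f := φ h) (y := φ g x) |>.1
      (by rwa [aux_symm_apply])
    exact this
  have h0 : sInf S = ⊥ := by
    rcases hsimple _ hstab with h | h
    · exact h
    · exfalso
      have hIS : I ∈ S := ⟨1, by
        simp only [map_one]
        exact Ideal.map_id I⟩
      have : (⊤ : Ideal L) ≤ I := h ▸ sInf_le hIS
      exact hI.ne_top (top_le_iff.1 this)
  have hle : hfin.toFinset.inf id ≤ J := by
    rw [Finset.inf_id_eq_sInf, hfin.coe_toFinset, h0]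
    exact bot_le
  obtain ⟨K, hKS, hKJ⟩ := (hJ.isPrime.inf_le').1 hle
  rw [Set.Finite.mem_toFinset] at hKS
  obtain ⟨g, rfl⟩ := hKS
  haveI : (I.map (φ g : L →+* L)).IsMaximal := Ideal.map_isMaximal_of_equiv (φ g)
  exact ⟨g, ‹(I.map (φ g : L →+* L)).IsMaximal›.eq_of_le hJ.ne_top hKJ⟩

end Aux

/-- A reduced Artinian (Noetherian zero-dimensional) commutative ring `L`, simple with
respect to a group `G` of automorphisms, is isomorphic to `Fⁿ` for a single field `F`
(realized as a quotient by a maximal ideal), and `G` acts transitively on the set of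
indecomposable idempotents of `L`. -/
theorem stmt5 {L G : Type*} [CommRing L] [Nontrivial L] [IsReduced L] [IsArtinianRing L]
    [Group G] (φ : G →* RingAut L)
    (hsimple : ∀ I : Ideal L, (∀ g : G, ∀ x ∈ I, φ g x ∈ I) → I = ⊥ ∨ I = ⊤) :
    (∃ (n : ℕ) (m : Ideal L), m.IsMaximal ∧ Nonempty (L ≃+* (Fin n → L ⧸ m))) ∧
    (∀ e f : L,
      (IsIdempotentElem e ∧ e ≠ 0 ∧ ∀ u v : L, IsIdempotentElem u → IsIdempotentElem v →
        u ≠ 0 → v ≠ 0 → u * v = 0 → e ≠ u + v) →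
      (IsIdempotentElem f ∧ f ≠ 0 ∧ ∀ u v : L, IsIdempotentElem u → IsIdempotentElem v →
        u ≠ 0 → v ≠ 0 → u * v = 0 → f ≠ u + v) →
      ∃ g : G, φ g e = f) := by
  classical
  haveI : Finite {I : Ideal L | I.IsMaximal} := (IsArtinianRing.setOfPred_isMaximal_finite L).to_subtype
  haveI := Fintype.ofFinite {I : Ideal L | I.IsMaximal}
  letI fieldInst : ∀ I : {I : Ideal L | I.IsMaximal}, Field (L ⧸ I.1) := fun I =>
    @Ideal.Quotient.field _ _ I.1 I.2
  set ψ : L ≃+* ∀ I : {I : Ideal L | I.IsMaximal}, L ⧸ I.1 :=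
    RingEquiv.ofBijective (Pi.ringHom fun I : {I : Ideal L | I.IsMaximal} =>
      Ideal.Quotient.mk I.1) (by
      constructor
      · intro x y hxy
        apply (IsArtinianRing.equivPi L).injective
        funext m
        have := congrFun hxy ⟨m.asIdeal, m.isMaximal⟩
        exact this
      · intro f
        refine ⟨(IsArtinianRing.equivPi L).symm
          (fun m => f ⟨m.asIdeal, m.isMaximal⟩), ?_⟩
        funext I
        have := congrFun ((IsArtinianRing.equivPi L).apply_symm_apply
          (fun m => f ⟨m.asIdeal, m.isMaximal⟩)) ⟨I.1, I.2⟩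
        exact this) with hψ
  have hψ_apply : ∀ (x : L) (I : {I : Ideal L | I.IsMaximal}),
      ψ x I = Ideal.Quotient.mk I.1 x := fun _ _ => rfl
  -- each indecomposable idempotent is an "indicator" of a unique maximal ideal
  have hindic : ∀ e : L,
      (IsIdempotentElem e ∧ e ≠ 0 ∧ ∀ u v : L, IsIdempotentElem u → IsIdempotentElem v →
        u ≠ 0 → v ≠ 0 → u * v = 0 → e ≠ u + v) →
      ∃ I : {I : Ideal L | I.IsMaximal},
        ∀ K, ψ e K = if K = I then 1 else 0 := by
    rintro e ⟨hid, hne, hind⟩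
    have hcomp : ∀ K, ψ e K = 0 ∨ ψ e K = 1 := by
      intro K
      have : (ψ e K) * (ψ e K) = ψ e K := by
        have : ψ (e * e) = ψ e := by rw [hid]
        rw [map_mul] at this
        exact congrFun this K
      exact IsIdempotentElem.iff_eq_zero_or_one.1 this
    have hex : ∃ I, ψ e I ≠ 0 := by
      by_contra h
      push_neg at h
      apply hne
      apply ψ.injective
      rw [map_zero]
      funext K; exact h K
    obtain ⟨I, hI⟩ := hex
    have hI1 : ψ e I = 1 := (hcomp I).resolve_left hI
    refine ⟨I, fun K => ?_⟩
    by_cases hKI : K = I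
    · rw [hKI, if_pos rfl]; exact hI1
    · simp only [hKI, if_false]
      by_contra hK0
      have hK1 : ψ e K = 1 := (hcomp K).resolve_left hK0
      -- decompose e = u + v, contradiction
      set u := ψ.symm (fun K' => if K' = I then 1 else 0) with hu
      set v := ψ.symm (fun K' => if K' = I then 0 else ψ e K') with hv
      have hψu : ψ u = fun K' => if K' = I then (1 : L ⧸ K'.1) else 0 :=
        ψ.apply_symm_apply _
      have hψv : ψ v = fun K' => if K' = I then 0 else ψ e K' :=
        ψ.apply_symm_apply _
      refine hind u v ?_ ?_ ?_ ?_ ?_ ?_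
      · apply ψ.injective
        rw [map_mul, hψu]; funext K'; by_cases h : K' = I <;> simp [h]
      · apply ψ.injective
        rw [map_mul, hψv]; funext K'
        by_cases h : K' = I
        · simp [h]
        · have h2 : ψ e K' * ψ e K' = ψ e K' := by
            rcases hcomp K' with h0 | h0 <;> rw [h0] <;> ring
          simp only [Pi.mul_apply, if_neg h]
          exact h2
      · intro h
        have := congrFun (hψu ▸ (h ▸ (map_zero ψ : ψ 0 = 0) : ψ u = 0)) I
        simp at this
      · intro h
        have := congrFun (hψv ▸ (h ▸ (map_zero ψ : ψ 0 = 0) : ψ v = 0)) K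
        simp [hKI] at this
        exact hK0 this
      · apply ψ.injective
        rw [map_mul, map_zero, hψu, hψv]; funext K'
        by_cases h : K' = I <;> simp [h]
      · apply ψ.injective
        rw [map_add, hψu, hψv]
        funext K'
        by_cases h : K' = I
        · subst h
          simp only [Pi.add_apply]
          simp only [if_true, add_zero]
          exact hI1
        · simp only [Pi.add_apply, if_neg h, zero_add]
  obtain ⟨m, hm⟩ := Ideal.exists_maximal L
  haveI := hm
  constructor
  · -- isomorphism with Fⁿ
    refine ⟨Fintype.card {I : Ideal L | I.IsMaximal}, m, hm, ⟨?_⟩⟩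
    have hiso : ∀ I : {I : Ideal L | I.IsMaximal}, Nonempty ((L ⧸ I.1) ≃+* (L ⧸ m)) := by
      intro I
      obtain ⟨g, hg⟩ := aux_trans φ hsimple m I.1 hm I.2
      exact ⟨(Ideal.quotientEquiv m I.1 (φ g) hg.symm).symm⟩
    let eqv : ∀ I : {I : Ideal L | I.IsMaximal}, (L ⧸ I.1) ≃+* (L ⧸ m) :=
      fun I => (hiso I).some
    exact ψ.trans ((RingEquiv.piCongrRight eqv).trans
      (RingEquiv.piCongrLeft' (fun _ => L ⧸ m) (Fintype.equivFin _)))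
  · -- transitivity on indecomposable idempotents
    intro e f he hf
    obtain ⟨I, hIe⟩ := hindic e he
    obtain ⟨J, hJf⟩ := hindic f hf
    obtain ⟨g, hg⟩ := aux_trans φ hsimple I.1 J.1 I.2 J.2
    refine ⟨g, ?_⟩
    apply ψ.injective
    funext K
    by_cases hKJ : K = J
    · -- component at J is 1 on both sides
      subst hKJ
      rw [hJf K, if_pos rfl, hψ_apply]
      have hidem : (Ideal.Quotient.mk K.1 (φ g e)) * (Ideal.Quotient.mk K.1 (φ g e))
          = Ideal.Quotient.mk K.1 (φ g e) := by
        rw [← map_mul, ← map_mul, he.1]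
      have hne0 : Ideal.Quotient.mk K.1 (φ g e) ≠ 0 := by
        intro h0
        have hmem : φ g e ∈ K.1 := Ideal.Quotient.eq_zero_iff_mem.1 h0
        rw [← hg] at hmem
        have : e ∈ I.1 := by
          have := Ideal.symm_apply_mem_of_equiv_iff (I := I.1) (f := φ g) (y := φ g e) |>.2 hmem
          rwa [(φ g).symm_apply_apply] at this
        have : ψ e I = 0 := by
          rw [hψ_apply]; exact Ideal.Quotient.eq_zero_iff_mem.2 this
        rw [hIe, if_pos rfl] at this
        exact one_ne_zero this
      rcases IsIdempotentElem.iff_eq_zero_or_one.1 hidem with h | h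
      · exact absurd h hne0
      · exact h
    · -- component at K ≠ J is 0 on both sides
      rw [hJf K, if_neg hKJ, hψ_apply]
      have hKmax : (K.1.comap (φ g : L →+* L)).IsMaximal := by
        haveI : (K.1).IsMaximal := K.2
        exact Ideal.comap_isMaximal_of_equiv (φ g)
      set K' : {I : Ideal L | I.IsMaximal} := ⟨K.1.comap (φ g : L →+* L), hKmax⟩ with hK'
      have hK'I : K' ≠ I := by
        intro hEq
        apply hKJ
        have h1 : K.1.comap (φ g : L →+* L) = I.1 := congrArg Subtype.val hEq
        have h2 : (K.1.comap (φ g : L →+* L)).map (φ g : L →+* L) = K.1 :=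
          Ideal.map_comap_of_surjective _ (φ g).surjective _
        have : K.1 = J.1 := by rw [← h2, h1, hg]
        exact Subtype.ext this
      have hem : e ∈ K'.1 := by
        have := hIe K'
        rw [if_neg hK'I, hψ_apply] at this
        exact Ideal.Quotient.eq_zero_iff_mem.1 this
      have : φ g e ∈ K.1 := Ideal.mem_comap.1 hem
      exact Ideal.Quotient.eq_zero_iff_mem.2 this
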